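/- Let M be a 4×4 positive semidefinite complex matrix (written M = (a_{ij}) in the basis |0⟩,|1⟩,|2⟩,|3⟩). Suppose that for all pairs of the 12 states |φ_1⟩, ..., |φ_12⟩ of Theorem 1 (defined with ω = e^{2πi/3}) that are mutually orthogonal, the post-measurement orthogonality conditions ⟨φ_s| (M ⊗ I_4) |φ_t⟩ = 0 hold for all s ≠ t. Then M is a scalar multiple of the identity matrix, i.e., M = a_{33}·I_4. -/

import Mathlib

open scoped ComplexOrder

noncomputable def omega3 : ℂ := Complex.exp (2 * Real.pi * Complex.I / 3)

/-- basis vector |k⟩ of ℂ⁴ -/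
def ket4 (k : ℕ) : Fin 4 → ℂ := fun i => if (i : ℕ) = k then 1 else 0

/-- Σ_{j=0}^{2} ω^{t j} |j⟩ in ℂ⁴ -/
noncomputable def uvec (t : ℕ) : Fin 4 → ℂ :=
  fun j => if (j : ℕ) ≤ 2 then omega3 ^ (t * (j : ℕ)) else 0

/-- Σ_{j=0}^{2} ω^{t j} |j+1⟩ in ℂ⁴ -/
noncomputable def uvec' (t : ℕ) : Fin 4 → ℂ :=
  fun j => if 1 ≤ (j : ℕ) then omega3 ^ (t * ((j : ℕ) - 1)) else 0

/-- product state a ⊗ b in ℂ⁴ ⊗ ℂ⁴ -/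
def prod44 (a b : Fin 4 → ℂ) : Fin 4 × Fin 4 → ℂ := fun p => a p.1 * b p.2

/-- the 12 states of Theorem 1: k = t + 3·block, t = 0,1,2 -/
noncomputable def phi12 (k : Fin 12) : Fin 4 × Fin 4 → ℂ :=
  match (k : ℕ) / 3 with
  | 0 => prod44 (ket4 0) (uvec ((k : ℕ) % 3))
  | 1 => prod44 (uvec ((k : ℕ) % 3)) (ket4 3)
  | 2 => prod44 (ket4 3) (uvec' ((k : ℕ) % 3))
  | _ => prod44 (uvec' ((k : ℕ) % 3)) (ket4 0)

/-- (M ⊗ I₄) applied to a vector of ℂ⁴ ⊗ ℂ⁴ -/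
noncomputable def applyMI4 (M : Matrix (Fin 4) (Fin 4) ℂ) (x : Fin 4 × Fin 4 → ℂ) :
    Fin 4 × Fin 4 → ℂ :=
  fun p => ∑ k : Fin 4, M p.1 k * x (k, p.2)


lemma omega3_ne_zero : omega3 ≠ 0 := Complex.exp_ne_zero _

lemma omega3_cube : omega3 ^ 3 = 1 := by
  rw [omega3, ← Complex.exp_nat_mul]
  have h : (3:ℕ) * (2 * (Real.pi:ℂ) * Complex.I / 3) = 2 * Real.pi * Complex.I := by
    push_cast; ring
  rw [h, Complex.exp_two_pi_mul_I]

lemma omega3_ne_one : omega3 ≠ 1 := by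
  intro h
  rw [omega3, Complex.exp_eq_one_iff] at h
  obtain ⟨n, hn⟩ := h
  have hpi : (Real.pi:ℂ) ≠ 0 := by exact_mod_cast Real.pi_ne_zero
  have hI := Complex.I_ne_zero
  have hz : (2 * (Real.pi:ℂ) * Complex.I) ≠ 0 :=
    mul_ne_zero (mul_ne_zero two_ne_zero hpi) hI
  have h3' : ((3 * n : ℤ) : ℂ) * (2 * (Real.pi:ℂ) * Complex.I) =
      ((1:ℤ):ℂ) * (2 * (Real.pi:ℂ) * Complex.I) := by
    push_cast
    field_simp at hn
    linear_combination (-(2 * (Real.pi:ℂ) * Complex.I)) * hn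
  have h3 : (3 * n : ℤ) = 1 := by exact_mod_cast mul_right_cancel₀ hz h3'
  omega

lemma omega3_sum : 1 + omega3 + omega3 ^ 2 = 0 := by
  have h := omega3_cube
  have h2 : (omega3 - 1) * (1 + omega3 + omega3 ^ 2) = 0 := by linear_combination h
  rcases mul_eq_zero.mp h2 with h3 | h3
  · exact absurd (by linear_combination h3 : omega3 = 1) omega3_ne_one
  · exact h3

lemma omega3_abs : ‖omega3‖ = 1 := by
  rw [omega3, Complex.norm_exp]
  norm_num [Complex.div_re, Complex.mul_re, Complex.mul_im, Complex.normSq]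

lemma omega3_conj : (starRingEnd ℂ) omega3 = omega3 ^ 2 := by
  have h1 : omega3 * (starRingEnd ℂ) omega3 = 1 := by
    rw [Complex.mul_conj]
    norm_cast
    rw [Complex.normSq_eq_norm_sq, omega3_abs]; norm_num
  have h2 : omega3 * omega3 ^ 2 = 1 := by linear_combination omega3_cube
  exact mul_left_cancel₀ omega3_ne_zero (h1.trans h2.symm)

lemma fv0 : ((0:Fin 4):ℕ) = 0 := rfl
lemma fv1 : ((1:Fin 4):ℕ) = 1 := rfl
lemma fv2 : ((2:Fin 4):ℕ) = 2 := rfl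
lemma fv3 : ((3:Fin 4):ℕ) = 3 := rfl
lemma fw0 : ((0:Fin 12):ℕ) = 0 := rfl
lemma fw3 : ((3:Fin 12):ℕ) = 3 := rfl
lemma fw4 : ((4:Fin 12):ℕ) = 4 := rfl
lemma fw5 : ((5:Fin 12):ℕ) = 5 := rfl
lemma fw6 : ((6:Fin 12):ℕ) = 6 := rfl
lemma fw9 : ((9:Fin 12):ℕ) = 9 := rfl
lemma fw10 : ((10:Fin 12):ℕ) = 10 := rfl
lemma fw11 : ((11:Fin 12):ℕ) = 11 := rfl

set_option maxHeartbeats 4000000 in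
theorem povm_trivial_dim4 (M : Matrix (Fin 4) (Fin 4) ℂ) (hM : M.PosSemidef)
    (horth : ∀ s t : Fin 12, s ≠ t →
      ∑ p : Fin 4 × Fin 4, (starRingEnd ℂ) (phi12 s p) * applyMI4 M (phi12 t) p = 0) :
    M = M 3 3 • (1 : Matrix (Fin 4) (Fin 4) ℂ) := by
  have hsum := omega3_sum
  have e1 := horth 0 9 (by decide)
  have e2 := horth 0 10 (by decide)
  have e3 := horth 0 11 (by decide)
  have e4 := horth 9 0 (by decide)
  have e5 := horth 10 0 (by decide)
  have e6 := horth 11 0 (by decide)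
  have e7 := horth 3 6 (by decide)
  have e8 := horth 4 6 (by decide)
  have e9 := horth 5 6 (by decide)
  have e10 := horth 6 3 (by decide)
  have e11 := horth 6 4 (by decide)
  have e12 := horth 6 5 (by decide)
  have e13 := horth 3 4 (by decide)
  have e14 := horth 3 5 (by decide)
  have e15 := horth 4 3 (by decide)
  have e16 := horth 4 5 (by decide)
  have e17 := horth 5 3 (by decide)
  have e18 := horth 5 4 (by decide)
  have e19 := horth 9 10 (by decide)
  have e20 := horth 9 11 (by decide)
  have p9 : phi12 9 = prod44 (uvec' 0) (ket4 0) := rfl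
  have p10 : phi12 10 = prod44 (uvec' 1) (ket4 0) := rfl
  have p11 : phi12 11 = prod44 (uvec' 2) (ket4 0) := rfl
  simp only [p9, p10, p11] at e1 e2 e3 e4 e5 e6 e19 e20
  simp only [phi12, prod44, ket4, uvec, uvec', applyMI4, Fintype.sum_prod_type,
    Fin.sum_univ_four, Fin.isValue, fv0, fv1, fv2, fv3, fw0, fw3, fw4, fw5, fw6, fw9, fw10, fw11,
    map_pow, omega3_conj, map_one, map_zero] at e1 e2 e3 e4 e5 e6 e7 e8 e9 e10 e11 e12 e13 e14 e15 e16 e17 e18 e19 e20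
  norm_num at e1 e2 e3 e4 e5 e6 e7 e8 e9 e10 e11 e12 e13 e14 e15 e16 e17 e18 e19 e20
  simp only [map_pow, omega3_conj] at e5 e6 e8 e9 e15 e16 e17 e18
  have h01 : M 0 1 = 0 := by linear_combination ((1/3) + (0) * omega3) * e1 + ((1/3) + (0) * omega3) * e2 + ((1/3) + (0) * omega3) * e3 + ((-1/3) * M 0 2 + (-1/3) * M 0 3 + (1/3) * omega3 ^ 1 * M 0 3 + (-1/3) * omega3 ^ 2 * M 0 3) * hsum
  have h02 : M 0 2 = 0 := by linear_combination ((1/3) + (0) * omega3) * e1 + ((-1/3) + (-1/3) * omega3) * e2 + ((0) + (1/3) * omega3) * e3 + ((2/3) * M 0 2 + (-1/3) * omega3 ^ 1 * M 0 2 + (-1/3) * M 0 3 + (1/3) * omega3 ^ 1 * M 0 3 + (1/3) * omega3 ^ 2 * M 0 3 + (-1/3) * omega3 ^ 3 * M 0 3) * hsum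
  have h03 : M 0 3 = 0 := by linear_combination ((1/3) + (0) * omega3) * e1 + ((0) + (1/3) * omega3) * e2 + ((-1/3) + (-1/3) * omega3) * e3 + ((-1/3) * M 0 2 + (1/3) * omega3 ^ 1 * M 0 2 + (2/3) * M 0 3 + (-2/3) * omega3 ^ 1 * M 0 3 + (1/3) * omega3 ^ 3 * M 0 3) * hsum
  have h10 : M 1 0 = 0 := by linear_combination ((1/3) + (0) * omega3) * e4 + ((1/3) + (0) * omega3) * e5 + ((1/3) + (0) * omega3) * e6 + ((-1/3) * M 2 0 + (1/3) * omega3 ^ 1 * M 2 0 + (-1/3) * omega3 ^ 2 * M 2 0 + (-1/3) * M 3 0 + (1/3) * omega3 ^ 1 * M 3 0 + (-1/3) * omega3 ^ 3 * M 3 0 + (1/3) * omega3 ^ 5 * M 3 0 + (-1/3) * omega3 ^ 6 * M 3 0) * hsum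
  have h20 : M 2 0 = 0 := by linear_combination ((1/3) + (0) * omega3) * e4 + ((0) + (1/3) * omega3) * e5 + ((-1/3) + (-1/3) * omega3) * e6 + ((2/3) * M 2 0 + (-2/3) * omega3 ^ 1 * M 2 0 + (1/3) * omega3 ^ 3 * M 2 0 + (-1/3) * M 3 0 + (1/3) * omega3 ^ 1 * M 3 0 + (-1/3) * omega3 ^ 3 * M 3 0 + (1/3) * omega3 ^ 4 * M 3 0 + (-1/3) * omega3 ^ 5 * M 3 0 + (1/3) * omega3 ^ 7 * M 3 0) * hsum
  have h30 : M 3 0 = 0 := by linear_combination ((1/3) + (0) * omega3) * e4 + ((-1/3) + (-1/3) * omega3) * e5 + ((0) + (1/3) * omega3) * e6 + ((-1/3) * M 2 0 + (1/3) * omega3 ^ 1 * M 2 0 + (1/3) * omega3 ^ 2 * M 2 0 + (-1/3) * omega3 ^ 3 * M 2 0 + (2/3) * M 3 0 + (-2/3) * omega3 ^ 1 * M 3 0 + (2/3) * omega3 ^ 3 * M 3 0 + (-1/3) * omega3 ^ 4 * M 3 0 + (1/3) * omega3 ^ 6 * M 3 0 + (-1/3) * omega3 ^ 7 * M 3 0)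 * hsum
  have h13 : M 1 3 = 0 := by linear_combination ((-1/3) + (-1/3) * omega3) * e1 + ((1/3) + (0) * omega3) * e2 + ((0) + (1/3) * omega3) * e3 + ((2/3) + (1/3) * omega3) * e7 + ((1/3) + (2/3) * omega3) * e8 + ((1/3) * M 0 2 + (-1/3) * omega3 ^ 1 * M 0 2 + (-2/3) * M 0 3 + (1/3) * omega3 ^ 2 * M 0 3 + (-1/3) * omega3 ^ 3 * M 0 3 + (1/3) * M 1 3 + (-2/3) * omega3 ^ 1 * M 1 3 + (-2/3) * M 2 3 + (1/3) * omega3 ^ 1 * M 2 3 + (1/3) * omega3 ^ 2 * M 2 3 + (-2/3) * omega3 ^ 3 * M 2 3) * hsum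
  have h23 : M 2 3 = 0 := by linear_combination ((0) + (1/3) * omega3) * e1 + ((-1/3) + (-1/3) * omega3) * e2 + ((1/3) + (0) * omega3) * e3 + ((1/3) + (-1/3) * omega3) * e7 + ((-1/3) + (-2/3) * omega3) * e8 + ((2/3) * omega3 ^ 1 * M 0 3 + (-1/3) * omega3 ^ 2 * M 0 3 + (-1/3) * M 1 3 + (2/3) * omega3 ^ 1 * M 1 3 + (2/3) * M 2 3 + (-1/3) * omega3 ^ 1 * M 2 3 + (-1/3) * omega3 ^ 2 * M 2 3 + (2/3) * omega3 ^ 3 * M 2 3) * hsum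
  have h31 : M 3 1 = 0 := by linear_combination ((0) + (1/3) * omega3) * e4 + ((1/3) + (0) * omega3) * e5 + ((-1/3) + (-1/3) * omega3) * e6 + ((1/3) + (-1/3) * omega3) * e10 + ((-1/3) + (-2/3) * omega3) * e11 + ((-1/3) * omega3 ^ 1 * M 2 0 + (1/3) * omega3 ^ 3 * M 2 0 + (2/3) * omega3 ^ 1 * M 3 0 + (-2/3) * omega3 ^ 2 * M 3 0 + (1/3) * omega3 ^ 4 * M 3 0 + (-1/3) * omega3 ^ 5 * M 3 0 + (1/3) * omega3 ^ 7 * M 3 0 + (2/3) * M 3 1 + (-1/3) * M 3 2 + (2/3) * omega3 ^ 1 * M 3 2) * hsum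
  have h32 : M 3 2 = 0 := by linear_combination ((-1/3) + (-1/3) * omega3) * e4 + ((0) + (1/3) * omega3) * e5 + ((1/3) + (0) * omega3) * e6 + ((2/3) + (1/3) * omega3) * e10 + ((1/3) + (2/3) * omega3) * e11 + ((1/3) * M 2 0 + (-1/3) * omega3 ^ 2 * M 2 0 + (-2/3) * M 3 0 + (2/3) * omega3 ^ 2 * M 3 0 + (-2/3) * omega3 ^ 3 * M 3 0 + (1/3) * omega3 ^ 5 * M 3 0 + (-1/3) * omega3 ^ 6 * M 3 0 + (-2/3) * M 3 1 + (1/3) * M 3 2 + (-2/3) * omega3 ^ 1 * M 3 2) * hsum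
  have h12 : M 1 2 = 0 := by linear_combination ((-1/3) + (-1/3) * omega3) * e1 + ((0) + (1/3) * omega3) * e2 + ((1/3) + (0) * omega3) * e3 + ((2/3) + (1/3) * omega3) * e4 + ((1/3) + (2/3) * omega3) * e5 + ((-1/3) + (0) * omega3) * e13 + ((-1/3) + (-1/3) * omega3) * e14 + ((1/3) + (1/3) * omega3) * e15 + ((1/3) + (0) * omega3) * e16 + ((-1/3) * M 0 1 + (1/3) * omega3 ^ 1 * M 0 1 + (-1/3) * omega3 ^ 2 * M 0 2 + (1/3) * omega3 ^ 3 * M 0 2 + (1/3) * M 0 3 + (-1/3) * omega3 ^ 2 * M 0 3 + (-1/3) * M 1 0 + (-1/3) * omega3 ^ 1 * M 1 0 + (1/3) * omega3 ^ 1 * M 1 1 + (-1/3) * omega3 ^ 2 * M 1 1 + (1) * M 1 2 + (-1) * omega3 ^ 1 * M 1 2 + (2/3) * omega3 ^ 3 * M 1 2 + (-1/3) * omega3 ^ 4 * M 1 2 + (-1/3) * omega3 ^ 2 * M 2 0 + (-1/3) * omega3 ^ 3 * M 2 0 + (1/3) * omega3 ^ 1 * M 2 1 + (-1/3) * omega3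 ^ 4 * M 2 1 + (1/3) * omega3 ^ 2 * M 2 2 + (-1/3) * omega3 ^ 3 * M 2 2 + (1/3) * omega3 ^ 5 * M 2 2 + (-1/3) * omega3 ^ 6 * M 2 2 + (-2/3) * M 3 0 + (1/3) * omega3 ^ 1 * M 3 0 + (1/3) * omega3 ^ 2 * M 3 0 + (-2/3) * omega3 ^ 3 * M 3 0) * hsum
  have h21 : M 2 1 = 0 := by linear_combination ((0) + (1/3) * omega3) * e1 + ((0) + (1/3) * omega3) * e2 + ((0) + (1/3) * omega3) * e3 + ((1/3) + (-1/3) * omega3) * e4 + ((2/3) + (1/3) * omega3) * e5 + ((-1/3) + (0) * omega3) * e13 + ((0) + (1/3) * omega3) * e14 + ((0) + (-1/3) * omega3) * e15 + ((1/3) + (0) * omega3) * e16 + ((-1/3) * omega3 ^ 1 * M 0 1 + (-1/3) * omega3 ^ 3 * M 0 2 + (-1/3) * omega3 ^ 1 * M 0 3 + (1/3) * omega3 ^ 2 * M 0 3 + (-1/3) * omega3 ^ 3 * M 0 3 + (-2/3) * M 1 0 + (1/3) * omega3 ^ 1 * M 1 0 + (1/3) * omega3 ^ 1 * M 1 1 +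 (-1/3) * omega3 ^ 2 * M 1 1 + (1/3) * omega3 ^ 2 * M 1 2 + (-1/3) * omega3 ^ 4 * M 1 2 + (-2/3) * omega3 ^ 2 * M 2 0 + (1/3) * omega3 ^ 3 * M 2 0 + (1) * M 2 1 + (-2/3) * omega3 ^ 1 * M 2 1 + (-1/3) * omega3 ^ 2 * M 2 1 + (2/3) * omega3 ^ 3 * M 2 1 + (-1/3) * omega3 ^ 4 * M 2 1 + (1/3) * omega3 ^ 2 * M 2 2 + (-1/3) * omega3 ^ 3 * M 2 2 + (1/3) * omega3 ^ 5 * M 2 2 + (-1/3) * omega3 ^ 6 * M 2 2 + (-1/3) * M 3 0 + (2/3) * omega3 ^ 1 * M 3 0 + (-1/3) * omega3 ^ 2 * M 3 0 + (-1/3) * omega3 ^ 3 * M 3 0) * hsum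
  have h00 : M 0 0 = M 3 3 := by linear_combination ((0) + (-1) * omega3) * e2 + ((-1) + (0) * omega3) * e4 + ((1) + (0) * omega3) * e7 + ((1) + (0) * omega3) * e11 + ((1) + (0) * omega3) * e13 + ((0) + (-1) * omega3) * e19 + ((-1) * M 0 3 + (1) * omega3 ^ 1 * M 0 3 + (-1) * M 1 3 + (1) * omega3 ^ 1 * M 1 3 + (-1) * M 2 3 + (1) * omega3 ^ 1 * M 2 3 + (-1) * M 3 3 + (1) * omega3 ^ 1 * M 3 3) * hsum
  have h11 : M 1 1 = M 3 3 := by linear_combination ((-1/3) + (-1/3) * omega3) * e1 + ((-1/3) + (-4/3) * omega3) * e2 + ((-1/3) + (-1/3) * omega3) * e3 + ((-2/3) + (1/3) * omega3) * e4 + ((-1/3) + (0) * omega3) * e5 + ((0) + (-1/3) * omega3) * e6 + ((1) + (0) * omega3) * e7 + ((1) + (0) * omega3) * e11 + ((2/3) + (-1/3) * omega3) * e13 + ((-1/3) + (0) * omega3) * e14 + ((0) + (1/3) * omega3) * e15 + ((-1/3) + (0) * omega3) * e16 + ((0) + (-1) * omega3) * e19 + ((1) * M 0 1 + (1/3) *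 M 0 2 + (2/3) * omega3 ^ 2 * M 0 2 + (-2/3) * M 0 3 + (1) * omega3 ^ 1 * M 0 3 + (1/3) * omega3 ^ 3 * M 0 3 + (2/3) * M 1 0 + (-1/3) * omega3 ^ 1 * M 1 0 + (1) * M 1 1 + (-2/3) * omega3 ^ 1 * M 1 1 + (1/3) * omega3 ^ 2 * M 1 1 + (1/3) * omega3 ^ 2 * M 1 2 + (-1/3) * omega3 ^ 3 * M 1 2 + (1/3) * omega3 ^ 4 * M 1 2 + (-1) * M 1 3 + (1) * omega3 ^ 1 * M 1 3 + (1/3) * M 2 0 + (-1/3) * omega3 ^ 1 * M 2 0 + (1/3) * omega3 ^ 2 * M 2 0 + (1/3) * omega3 ^ 1 * M 2 1 + (1/3) * omega3 ^ 2 * M 2 1 + (-2/3) * omega3 ^ 3 * M 2 1 + (1/3) * omega3 ^ 4 * M 2 1 + (1/3) * omega3 ^ 2 * M 2 2 + (-1/3) * omega3 ^ 5 * M 2 2 + (1/3) * omega3 ^ 6 * M 2 2 + (-1) * M 2 3 + (1) * omega3 ^ 1 * M 2 3 + (-1/3) * M 3 0 + (1/3) * omega3 ^ 2 * M 3 0 +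 (-1/3) * omega3 ^ 3 * M 3 0 + (1/3) * omega3 ^ 4 * M 3 0 + (-1/3) * omega3 ^ 6 * M 3 0 + (1/3) * omega3 ^ 7 * M 3 0 + (-1) * M 3 3 + (1) * omega3 ^ 1 * M 3 3) * hsum
  have h22 : M 2 2 = M 3 3 := by linear_combination ((0) + (1/3) * omega3) * e1 + ((1/3) + (-1) * omega3) * e2 + ((-1/3) + (-1/3) * omega3) * e3 + ((-1) + (-1/3) * omega3) * e4 + ((0) + (-1/3) * omega3) * e5 + ((0) + (-1/3) * omega3) * e6 + ((1) + (0) * omega3) * e7 + ((1) + (0) * omega3) * e11 + ((1) + (1/3) * omega3) * e13 + ((-1/3) + (0) * omega3) * e14 + ((-1/3) + (-1/3) * omega3) * e15 + ((-1/3) + (0) * omega3) * e16 + ((0) + (-1) * omega3) * e19 + ((1/3) * M 0 1 + (1/3) * M 0 2 + (-2/3) * omega3 ^ 1 * M 0 2 + (2/3) * omega3 ^ 2 * M 0 2 + (-1) * M 0 3 + (2/3) * omega3 ^ 1 * M 0 3 + (1/3) * omega3 ^ 3 * M 0 3 + (1/3) * M 1 0 + (1/3) * omega3 ^ 1 * M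 1 0 + (1/3) * omega3 ^ 2 * M 1 1 + (1/3) * omega3 ^ 2 * M 1 2 + (-1/3) * omega3 ^ 3 * M 1 2 + (1/3) * omega3 ^ 4 * M 1 2 + (-1) * M 1 3 + (1) * omega3 ^ 1 * M 1 3 + (1/3) * M 2 0 + (-1/3) * omega3 ^ 1 * M 2 0 + (2/3) * omega3 ^ 3 * M 2 0 + (1/3) * omega3 ^ 4 * M 2 1 + (1) * M 2 2 + (-1) * omega3 ^ 1 * M 2 2 + (2/3) * omega3 ^ 3 * M 2 2 + (-1/3) * omega3 ^ 5 * M 2 2 + (1/3) * omega3 ^ 6 * M 2 2 + (-1) * M 2 3 + (1) * omega3 ^ 1 * M 2 3 + (1/3) * omega3 ^ 1 * M 3 0 + (-1/3) * omega3 ^ 2 * M 3 0 + (1/3) * omega3 ^ 4 * M 3 0 + (-1/3) * omega3 ^ 6 * M 3 0 + (1/3) * omega3 ^ 7 * M 3 0 + (-1) * M 3 3 + (1) * omega3 ^ 1 * M 3 3) * hsum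

  ext i j
  fin_cases i <;> fin_cases j <;>
    simp [Matrix.smul_apply, Matrix.one_apply, h01, h02, h03, h10, h12, h13, h20, h21, h23,
      h30, h31, h32, h00, h11, h22]
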